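/- For n > 4 and any k with 0 ≤ k < n/2 − √n, the inequality (1/2 − 1/√n)^k · (1/2 + 1/√n)^{n−k} ≥ 2^{−(n−2)} holds. -/

import Mathlib

open Real

-- polynomial key
lemma key_poly (t : ℝ) (h0 : 0 ≤ t) (h1 : t ≤ 3/4) :
    13824*(1+t)^2 ≤ (24+17*t-3*t^2)^3 := by
  nlinarith [mul_nonneg h0 h0, mul_nonneg (mul_nonneg h0 h0) h0,
    mul_nonneg (mul_nonneg (mul_nonneg h0 h0) h0) h0,
    mul_nonneg h0 (sub_nonneg.2 h1), sq_nonneg t, sq_nonneg (t-3/4),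
    mul_nonneg (mul_nonneg h0 h0) (sub_nonneg.2 h1),
    mul_nonneg (mul_nonneg (mul_nonneg h0 h0) h0) (sub_nonneg.2 h1),
    mul_nonneg (mul_nonneg (mul_nonneg (mul_nonneg h0 h0) h0) h0) (sub_nonneg.2 h1)]

set_option maxHeartbeats 2000000 in
lemma main_lem (t : ℝ) (K M : ℕ) (ht0 : 0 < t) (ht1 : t < 1)
    (hK : (K:ℝ) * t^2 ≤ 2 - 2*t) (hM : 4 ≤ (M:ℝ) * t) :
    4 ≤ (1 - t^2)^K * (1+t)^M := by
  rcases Nat.eq_zero_or_pos K with hK0 | hK1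
  · subst hK0
    simp only [pow_zero, one_mul]
    have hb : (1:ℝ) + (M:ℝ)*t ≤ (1+t)^M := one_add_mul_le_pow (by linarith) M
    linarith
  · -- K ≥ 1, so t ≤ 3/4
    have hKR : (1:ℝ) ≤ K := by exact_mod_cast hK1
    have ht34 : t ≤ 3/4 := by nlinarith [sq_nonneg t]
    have h1t2 : (0:ℝ) < 1 - t^2 := by nlinarith
    have h1t : (0:ℝ) < 1 + t := by linarith
    set c : ℝ := t^2/(1-t^2) with hc
    set γ : ℝ := (3*t^2+7*t)/(8*(1+t)) with hγ
    have hc0 : 0 ≤ c := by positivity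
    have hγ0 : 0 ≤ γ := by positivity
    -- exp(-c) ≤ 1 - t^2
    have hec : Real.exp (-c) ≤ 1 - t^2 := by
      have h1 : 1 + c ≤ Real.exp c := by linarith [Real.add_one_le_exp c]
      have h2 : (1+c) * (1-t^2) = 1 := by
        rw [hc]; field_simp; ring
      have h3 : Real.exp (-c) * Real.exp c = 1 := by
        rw [← Real.exp_add]; simp
      nlinarith [Real.exp_pos c, Real.exp_pos (-c),
        mul_le_mul_of_nonneg_left h1 (Real.exp_nonneg (-c))]
    -- exp γ ≤ 1 + t
    have hγlt : γ/3 < 1 := by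
      rw [hγ]
      rw [div_lt_one (by norm_num)]
      rw [div_lt_iff₀ (by linarith)]
      nlinarith
    have heγ : Real.exp γ ≤ 1 + t := by
      have hd : (0:ℝ) < 1 - γ/3 := by linarith
      have he1 : Real.exp (-(γ/3)) ≥ 1 - γ/3 := by linarith [Real.add_one_le_exp (-(γ/3))]
      have he2 : Real.exp (γ/3) ≤ 1/(1-γ/3) := by
        rw [le_div_iff₀ hd]
        calc Real.exp (γ/3) * (1-γ/3) ≤ Real.exp (γ/3) * Real.exp (-(γ/3)) := by
              exact mul_le_mul_of_nonneg_left he1 (Real.exp_nonneg _)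
          _ = 1 := by rw [← Real.exp_add]; norm_num
      have he3 : Real.exp γ = (Real.exp (γ/3))^3 := by
        rw [← Real.exp_nat_mul]; congr 1; push_cast; ring
      have hd3 : 1 ≤ (1-γ/3)^3 * (1+t) := by
        have hdd : 1 - γ/3 = (24+17*t-3*t^2)/(24*(1+t)) := by
          rw [hγ]; field_simp; ring
        rw [hdd, div_pow]
        rw [div_mul_eq_mul_div, le_div_iff₀ (by positivity)]
        have := key_poly t (le_of_lt ht0) ht34
        nlinarith [sq_nonneg (1+t), h1t]
      calc Real.exp γ = (Real.exp (γ/3))^3 := he3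
        _ ≤ (1/(1-γ/3))^3 := by
            exact pow_le_pow_left₀ (Real.exp_nonneg _) he2 3
        _ ≤ 1 + t := by
            rw [div_pow, one_pow, div_le_iff₀ (by positivity)]
            nlinarith
    -- powers
    have hp1 : Real.exp (-((K:ℝ)*c)) ≤ (1-t^2)^K := by
      have : Real.exp (-((K:ℝ)*c)) = (Real.exp (-c))^K := by
        rw [← Real.exp_nat_mul]; congr 1; ring
      rw [this]
      exact pow_le_pow_left₀ (Real.exp_nonneg _) hec K
    have hp2 : Real.exp ((M:ℝ)*γ) ≤ (1+t)^M := by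
      have : Real.exp ((M:ℝ)*γ) = (Real.exp γ)^M := Real.exp_nat_mul γ M
      rw [this]
      exact pow_le_pow_left₀ (Real.exp_nonneg _) heγ M
    -- net exponent ≥ 3/2
    have hKc : (K:ℝ)*c ≤ 2/(1+t) := by
      rw [hc, mul_div_assoc']
      rw [div_le_div_iff₀ h1t2 h1t]
      nlinarith
    have hMγ : (3*t+7)/(2*(1+t)) ≤ (M:ℝ)*γ := by
      have hM' : 4/t ≤ (M:ℝ) := (div_le_iff₀ ht0).mpr hM
      have : (3*t+7)/(2*(1+t)) = (4/t)*γ := by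
        rw [hγ]; field_simp; ring
      rw [this]
      exact mul_le_mul_of_nonneg_right hM' hγ0
    have hnet : (3:ℝ)/2 ≤ (M:ℝ)*γ - (K:ℝ)*c := by
      have : (3*t+7)/(2*(1+t)) - 2/(1+t) = 3/2 := by
        field_simp; ring
      linarith
    have hexp32 : (4:ℝ) ≤ Real.exp (3/2) := by
      have h1 : Real.exp (3/2) = Real.exp 1 * Real.exp (1/2) := by
        rw [← Real.exp_add]; norm_num
      have h2 : (2.7182818283:ℝ) < Real.exp 1 := Real.exp_one_gt_d9
      have h3 : (3:ℝ)/2 ≤ Real.exp (1/2) := by linarith [Real.add_one_le_exp (1/2:ℝ)]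
      have h4 : (2.7182818283:ℝ)*(3/2) ≤ Real.exp 1 * Real.exp (1/2) :=
        mul_le_mul h2.le h3 (by norm_num) (Real.exp_pos 1).le
      rw [h1]
      have h5 : (4:ℝ) ≤ 2.7182818283*(3/2) := by norm_num
      linarith
    calc (4:ℝ) ≤ Real.exp (3/2) := hexp32
      _ ≤ Real.exp ((M:ℝ)*γ - (K:ℝ)*c) := Real.exp_le_exp.mpr hnet
      _ = Real.exp (-((K:ℝ)*c)) * Real.exp ((M:ℝ)*γ) := by
          rw [← Real.exp_add]; congr 1; ring
      _ ≤ (1-t^2)^K * (1+t)^M := by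
          exact mul_le_mul hp1 hp2 (Real.exp_nonneg _)
            (pow_nonneg (by linarith) K)

/-- Arithmetic-coding interval bound for the almost-balanced construction:
for `n > 4` and `k < n/2 − √n`,
`(1/2 − 1/√n)^k (1/2 + 1/√n)^(n−k) ≥ 2^{−(n−2)}`. -/
theorem stmt_17 (n k : ℕ) (hn : 4 < n)
    (hk : (k : ℝ) < (n : ℝ) / 2 - Real.sqrt n) :
    ((1 : ℝ) / 2 - 1 / Real.sqrt n) ^ k * (1 / 2 + 1 / Real.sqrt n) ^ (n - k) ≥
      1 / 2 ^ (n - 2) := by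
  have hn0 : (0:ℝ) < n := by positivity
  set s := Real.sqrt n with hsdef
  have hs2 : (2:ℝ) < s := by
    rw [hsdef]
    rw [show (2:ℝ) = Real.sqrt 4 by
      rw [show (4:ℝ) = 2^2 by norm_num, Real.sqrt_sq (by norm_num)]]
    exact Real.sqrt_lt_sqrt (by norm_num) (by exact_mod_cast hn)
  have hs0 : (0:ℝ) < s := by linarith
  have hsn : s^2 = n := Real.sq_sqrt (by positivity)
  set t : ℝ := 2/s with htdef
  have ht0 : 0 < t := by positivity
  have ht1 : t < 1 := by
    rw [htdef, div_lt_one hs0]; linarith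
  -- nat facts
  have h2kn : 2*k < n := by
    have : ((2*k:ℕ):ℝ) < (n:ℝ) := by push_cast; linarith
    exact_mod_cast this
  set M : ℕ := n - 2*k with hMdef
  have hMcast : (M:ℝ) = (n:ℝ) - 2*k := by
    rw [hMdef]; push_cast [Nat.cast_sub (le_of_lt h2kn)]; ring
  -- hypotheses of main lemma
  have key1 : 4*(k:ℝ) ≤ 2*s^2 - 4*s := by
    rw [hsn]; linarith
  have hK : (k:ℝ) * t^2 ≤ 2 - 2*t := by
    have e1 : (k:ℝ) * t^2 = 4*k/s^2 := by rw [htdef]; ring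
    have e2 : 2 - 2*t = 2 - 4/s := by rw [htdef]; ring
    rw [e1, e2, div_le_iff₀ (by positivity : (0:ℝ) < s^2)]
    have e3 : (2 - 4/s)*s^2 = 2*s^2 - 4*s := by field_simp
    rw [e3]; exact key1
  have key2 : 2*s ≤ (M:ℝ) := by
    rw [hMcast]; linarith
  have hM : 4 ≤ (M:ℝ) * t := by
    have e1 : (M:ℝ) * t = 2*M/s := by rw [htdef]; ring
    rw [e1, le_div_iff₀ hs0]
    linarith
  have hX : 4 ≤ (1 - t^2)^k * (1+t)^M := main_lem t k M ht0 ht1 hK hM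
  -- rewrite goal
  have e1 : (1:ℝ)/2 - 1/s = (1-t)/2 := by rw [htdef]; ring
  have e2 : (1:ℝ)/2 + 1/s = (1+t)/2 := by rw [htdef]; ring
  have ekM : n - k = k + M := by omega
  rw [e1, e2, ekM, pow_add]
  have h2n : (2:ℝ)^n = 2^k * 2^k * 2^M := by
    rw [← pow_add, ← pow_add]; congr 1; omega
  have hsplit : ((1-t)/2)^k * (((1+t)/2)^k * ((1+t)/2)^M)
      = ((1 - t^2)^k * (1+t)^M)/2^n := by
    have hs' : (1 - t^2)^k = (1-t)^k * (1+t)^k := by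
      rw [← mul_pow]; congr 1; ring
    rw [div_pow, div_pow, div_pow, hs', h2n]
    ring
  rw [hsplit]
  have h2n2 : (2:ℝ)^n = 2^(n-2) * 4 := by
    rw [show (4:ℝ) = 2^2 by norm_num, ← pow_add]; congr 1; omega
  have hp1 : (0:ℝ) < 2^(n-2) := by positivity
  have hp2 : (0:ℝ) < 2^n := by positivity
  rw [ge_iff_le, div_le_div_iff₀ hp1 hp2]
  have := mul_le_mul_of_nonneg_right hX hp1.le
  nlinarith
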